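/- For every countable infinite ordinal α there exists an infinite set Z ⊆ {0,1}^{<ω} such that the choosing-nodes-from-Z game has game value at least α for White (Black loses, and the ordinal rank of the game tree is ≥ α). -/

import Mathlib

/-- Two nodes of the binary tree are incomparable if neither is a prefix of the other. -/
def Incomp (u v : List Bool) : Prop := ¬(u <+: v ∨ v <+: u)

/-- Black has lost once the list of named nodes contains an incomparable pair. -/
def Lost (p : List (List Bool)) : Prop := ∃ u ∈ p, ∃ v ∈ p, Incomp u v

/-- Ordinal game values for White in the choosing-nodes-from-`Z` game. A position (the
finite list of nodes named so far) has value `0` once Black has named an incomparable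
pair; otherwise, with Black to move, its value is the supremum over Black's legal moves
(previously unnamed elements of `Z`) of the values of the resulting positions plus one. -/
inductive CGValue (Z : Set (List Bool)) : List (List Bool) → Ordinal → Prop
  | lost (p : List (List Bool)) (h : Lost p) : CGValue Z p 0
  | step (p : List (List Bool)) (h : ¬ Lost p) (g : List Bool → Ordinal)
      (hg : ∀ z ∈ Z, z ∉ p → CGValue Z (p ++ [z]) (g z)) :
      CGValue Z p (⨆ z : {z : List Bool // z ∈ Z ∧ z ∉ p}, (g z.1 + 1))

namespace CGAux

open Ordinal List

def code : List ℕ → List Bool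
  | [] => []
  | n :: s => List.replicate n false ++ true :: code s

theorem rep_prefix (a : ℕ) : ∀ (b : ℕ) (u v : List Bool),
    (List.replicate a false ++ true :: u <+: List.replicate b false ++ true :: v) ↔
      a = b ∧ u <+: v := by
  induction a with
  | zero =>
    rintro (_|b) u v
    · simp
    · simp [List.replicate_succ, List.cons_prefix_cons]
  | succ a ih =>
    rintro (_|b) u v
    · simp [List.replicate_succ, List.cons_prefix_cons]
    · simp [List.replicate_succ, List.cons_prefix_cons, ih]

theorem code_prefix : ∀ s t : List ℕ, code s <+: code t ↔ s <+: t := by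
  intro s
  induction s with
  | nil => intro t; simp [code]
  | cons a s ih =>
    rintro (_|⟨b,t⟩)
    · constructor
      · intro h; exact absurd (List.eq_nil_of_prefix_nil h) (by simp [code])
      · intro h; exact absurd (List.eq_nil_of_prefix_nil h) (by simp)
    · simp [code, rep_prefix, ih, List.cons_prefix_cons]

theorem code_inj : Function.Injective code := by
  intro s t h
  exact ((code_prefix s t).1 (h ▸ List.prefix_refl _)).eq_of_length
    (((code_prefix s t).1 (h ▸ List.prefix_refl _)).length_le.antisymm
     ((code_prefix t s).1 (h ▸ List.prefix_refl _)).length_le)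

variable (r : ℕ → ℕ → Prop) [IsWellOrder ℕ r]

def Dec (s : List ℕ) : Prop := s.Chain' (fun a b => r b a)

def Zr : Set (List Bool) := code '' {s | Dec r s}

noncomputable def O (m : List ℕ) : Ordinal.{0} :=
  if h : m = [] then type r else typein r (m.getLast h)

theorem O_append (m : List ℕ) (n : ℕ) : O r (m ++ [n]) = typein r n := by
  rw [O, dif_neg (by simp)]
  simp [List.getLast_append]

theorem O_lt (m : List ℕ) (hm : Dec r m) {δ : Ordinal.{0}} (hδ : δ < O r m) :
    ∃ n, typein r n = δ ∧ Dec r (m ++ [n]) := by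
  by_cases h : m = []
  · subst h
    rw [O, dif_pos rfl] at hδ
    obtain ⟨n, hn⟩ := typein_surj r hδ
    exact ⟨n, hn, List.isChain_singleton n⟩
  · rw [O, dif_neg h] at hδ
    obtain ⟨n, hn⟩ := typein_surj r (hδ.trans (typein_lt_type r _))
    refine ⟨n, hn, ?_⟩
    have hrel : r n (m.getLast h) := (typein_lt_typein r).1 (hn ▸ hδ)
    rw [Dec, List.Chain', List.isChain_append]
    refine ⟨hm, List.isChain_singleton n, ?_⟩
    intro x hx y hy
    simp only [List.head?_cons, Option.mem_def, Option.some.injEq] at hy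
    rw [List.getLast?_eq_getLast h] at hx
    simp only [Option.mem_def, Option.some.injEq] at hx
    subst hx; subst hy; exact hrel

theorem O_strict {m σ : List ℕ} (hσ : Dec r σ) (hpre : m <+: σ) (hne : m ≠ σ) :
    O r σ < O r m := by
  obtain ⟨rest, rfl⟩ := hpre
  have hrest : rest ≠ [] := by rintro rfl; simp at hne
  have hσne : m ++ rest ≠ [] := by simp [hrest]
  have hOσ : O r (m ++ rest) = typein r ((m ++ rest).getLast hσne) := dif_neg hσne
  by_cases h : m = []
  · subst h
    rw [hOσ, O, dif_pos rfl]
    exact typein_lt_type r _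
  · rw [hOσ, O, dif_neg h]
    rw [typein_lt_typein]
    haveI : IsTrans ℕ (fun a b => r b a) :=
      ⟨fun a b c h1 h2 => _root_.trans (r := r) h2 h1⟩
    have hp : List.Pairwise (fun a b => r b a) (m ++ rest) :=
      List.isChain_iff_pairwise.1 hσ
    have := (List.pairwise_append.1 hp).2.2 (m.getLast h) (List.getLast_mem h)
      (rest.getLast hrest) (List.getLast_mem hrest)
    rwa [List.getLast_append_of_ne_nil _ hrest]

theorem length_le_of_prefixes {q : List (List ℕ)} {m : List ℕ}
    (hnd : q.Nodup) (hpre : ∀ σ ∈ q, σ <+: m) : q.length ≤ m.length + 1 := by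
  have hinj : ∀ x ∈ q, ∀ y ∈ q, x.length = y.length → x = y := by
    intro x hx y hy hl
    exact (List.prefix_of_prefix_length_le (hpre x hx) (hpre y hy) hl.le).eq_of_length hl
  have hnd' : (q.map List.length).Nodup := List.Nodup.map_on hinj hnd
  have hsub : (q.map List.length).toFinset ⊆ Finset.range (m.length + 1) := by
    intro a ha
    rw [List.mem_toFinset, List.mem_map] at ha
    obtain ⟨x, hx, rfl⟩ := ha
    rw [Finset.mem_range]
    exact Nat.lt_succ_of_le (hpre x hx).length_le
  have := Finset.card_le_card hsub
  rwa [List.toFinset_card_of_nodup hnd', List.length_map, Finset.card_range] at this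

theorem not_lost {q : List (List ℕ)} {m : List ℕ}
    (hpre : ∀ σ ∈ q, σ <+: m) : ¬ Lost (q.map code) := by
  rintro ⟨u, hu, v, hv, hinc⟩
  rw [List.mem_map] at hu hv
  obtain ⟨σ, hσ, rfl⟩ := hu
  obtain ⟨τ, hτ, rfl⟩ := hv
  rcases List.prefix_or_prefix_of_prefix (hpre σ hσ) (hpre τ hτ) with h | h
  · exact hinc (Or.inl ((code_prefix σ τ).2 h))
  · exact hinc (Or.inr ((code_prefix τ σ).2 h))

theorem main : ∀ γ : Ordinal.{0}, ∀ (q : List (List ℕ)) (m : List ℕ),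
    (∀ σ ∈ q, Dec r σ) → (∀ σ ∈ q, σ <+: m) → m ∈ q → q.Nodup →
    omega0 * O r m + (m.length + 1 - q.length : ℕ) = γ →
    ∃ β : Ordinal.{u}, lift.{u} (O r m) ≤ β ∧ CGValue (Zr r) (q.map code) β := by
  intro γ
  induction γ using Ordinal.induction with
  | _ γ IH =>
  intro q m hdec hpre hmem hnd hγ
  have hmdec : Dec r m := hdec m hmem
  have hqlen : q.length ≤ m.length + 1 := length_le_of_prefixes hnd hpre
  have claim : ∀ z ∈ Zr r, z ∉ q.map code →
      ∃ β : Ordinal.{u}, CGValue (Zr r) (q.map code ++ [z]) β ∧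
        ∀ n, z = code (m ++ [n]) → lift.{u} (typein r n) ≤ β := by
    rintro z ⟨σ, hσdec, rfl⟩ hz
    have hσq : σ ∉ q := fun h => hz (List.mem_map_of_mem (f := code) h)
    by_cases hc : σ <+: m ∨ m <+: σ
    · rcases hc with hc | hc
      · -- new node below the max
        have hnd' : (q ++ [σ]).Nodup := by
          rw [List.nodup_append]
          exact ⟨hnd, List.nodup_singleton σ, by simpa using (fun a ha h => hσq (h ▸ ha) : ∀ a ∈ q, ¬a = σ)⟩
        have hqlen' : q.length + 1 ≤ m.length + 1 := by
          simpa using length_le_of_prefixes hnd' (by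
            intro τ hτ
            rcases List.mem_append.1 hτ with h | h
            · exact hpre τ h
            · simp only [List.mem_singleton] at h; subst h; exact hc)
        have hlt : omega0 * O r m + ((m.length + 1 - (q ++ [σ]).length : ℕ) : Ordinal) < γ := by
          rw [← hγ]
          apply add_lt_add_right
          rw [Nat.cast_lt]
          simp only [List.length_append, List.length_singleton]
          omega
        obtain ⟨β, hβ1, hβ2⟩ := IH _ hlt (q ++ [σ]) m
          (by intro τ hτ; rcases List.mem_append.1 hτ with h | h
              · exact hdec τ h
              · simp only [List.mem_singleton] at h; subst h; exact hσdec)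
          (by intro τ hτ; rcases List.mem_append.1 hτ with h | h
              · exact hpre τ h
              · simp only [List.mem_singleton] at h; subst h; exact hc)
          (List.mem_append.2 (Or.inl hmem)) hnd' rfl
        refine ⟨β, by rwa [List.map_append] at hβ2, ?_⟩
        intro n hn
        exfalso
        have := code_inj hn
        subst this
        have := hc.length_le
        simp at this
      · -- new node above the max
        have hσm : m ≠ σ := fun h => hσq (h ▸ hmem)
        have hOlt : O r σ < O r m := O_strict r hσdec hc hσm
        have hnd' : (q ++ [σ]).Nodup := by
          rw [List.nodup_append]
          exact ⟨hnd, List.nodup_singleton σ, by simpa using (fun a ha h => hσq (h ▸ ha) : ∀ a ∈ q, ¬a = σ)⟩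
        have hlt : omega0 * O r σ + ((σ.length + 1 - (q ++ [σ]).length : ℕ) : Ordinal) < γ := by
          rw [← hγ]
          calc omega0 * O r σ + ((σ.length + 1 - (q ++ [σ]).length : ℕ) : Ordinal)
              < omega0 * O r σ + omega0 := add_lt_add_right (nat_lt_omega0 _) _
            _ = omega0 * (O r σ + 1) := by rw [mul_add, mul_one]
            _ ≤ omega0 * O r m := by
                apply mul_le_mul_right
                exact Order.add_one_le_of_lt hOlt
            _ ≤ omega0 * O r m + ((m.length + 1 - q.length : ℕ) : Ordinal) := le_self_add
        obtain ⟨β, hβ1, hβ2⟩ := IH _ hlt (q ++ [σ]) σ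
          (by intro τ hτ; rcases List.mem_append.1 hτ with h | h
              · exact hdec τ h
              · simp only [List.mem_singleton] at h; subst h; exact hσdec)
          (by intro τ hτ; rcases List.mem_append.1 hτ with h | h
              · exact (hpre τ h).trans hc
              · simp only [List.mem_singleton] at h; subst h; exact List.prefix_refl _)
          (List.mem_append.2 (Or.inr (List.mem_singleton_self σ))) hnd' rfl
        refine ⟨β, by rwa [List.map_append] at hβ2, ?_⟩
        intro n hn
        have := code_inj hn
        subst this
        rw [← O_append r m n]
        exact hβ1
    · -- incomparable move: Black loses at once
      refine ⟨0, CGValue.lost _ ⟨code m, ?_, code σ, ?_, ?_⟩, ?_⟩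
      · exact List.mem_append.2 (Or.inl (List.mem_map_of_mem (f := code) hmem))
      · exact List.mem_append.2 (Or.inr (List.mem_singleton_self _))
      · rintro (h | h)
        · exact hc (Or.inr ((code_prefix m σ).1 h))
        · exact hc (Or.inl ((code_prefix σ m).1 h))
      · intro n hn
        exfalso
        have := code_inj hn
        exact hc (Or.inr ⟨[n], this.symm ▸ rfl⟩)
  classical
  set g : List Bool → Ordinal.{u} := fun z =>
    if h : ∃ β : Ordinal.{u}, CGValue (Zr r) (q.map code ++ [z]) β ∧
        ∀ n, z = code (m ++ [n]) → lift.{u} (typein r n) ≤ β then h.choose else 0 with hg_def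
  have hg : ∀ z ∈ Zr r, z ∉ q.map code → CGValue (Zr r) (q.map code ++ [z]) (g z) := by
    intro z hz hz'
    have h := claim z hz hz'
    rw [hg_def]; simp only [dif_pos h]
    exact h.choose_spec.1
  refine ⟨_, ?_, CGValue.step (q.map code) (not_lost hpre) g hg⟩
  apply le_of_forall_lt
  intro δ hδ
  obtain ⟨δ₀, rfl⟩ := mem_range_lift_of_le hδ.le
  rw [lift_lt] at hδ
  obtain ⟨n, hn, hdecn⟩ := O_lt r m hmdec hδ
  have hzZ : code (m ++ [n]) ∈ Zr r := ⟨m ++ [n], hdecn, rfl⟩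
  have hznp : code (m ++ [n]) ∉ q.map code := by
    rw [List.mem_map]
    rintro ⟨τ, hτ, hτe⟩
    have := code_inj hτe
    subst this
    have := (hpre _ hτ).length_le
    simp at this
  have h := claim _ hzZ hznp
  have hgz : lift.{u} (typein r n) ≤ g (code (m ++ [n])) := by
    rw [hg_def]; simp only [dif_pos h]
    exact h.choose_spec.2 n rfl
  calc lift.{u} δ₀ = lift.{u} (typein r n) := by rw [hn]
    _ < g (code (m ++ [n])) + 1 := (lt_add_one _).trans_le' hgz
    _ ≤ _ := Ordinal.le_iSup (fun z : {z : List Bool // z ∈ Zr r ∧ z ∉ q.map code} =>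
        g z.1 + 1) ⟨_, hzZ, hznp⟩

end CGAux

/-- For every countable infinite ordinal `α` there is an infinite set `Z` of binary
nodes whose choosing-nodes-from-`Z` game has game value at least `α` for White. -/
theorem exists_choosing_game_value_ge (α : Ordinal)
    (hα : Ordinal.omega0 ≤ α) (hcount : α < (Cardinal.aleph 1).ord) :
    ∃ Z : Set (List Bool), Z.Infinite ∧ ∃ β : Ordinal, α ≤ β ∧ CGValue Z [] β := by
  classical
  open CGAux Ordinal in
  have h2 : α.card ≤ Cardinal.aleph0 := by
    have := Cardinal.lt_ord.1 hcount
    rwa [← Cardinal.succ_aleph0, Order.lt_succ_iff] at this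
  have h3 : Cardinal.aleph0 ≤ α.card := by
    have := Ordinal.card_le_card hα
    rwa [Ordinal.card_omega0] at this
  have hcard : α.card = Cardinal.aleph0 := le_antisymm h2 h3
  obtain ⟨e⟩ : Nonempty (ℕ ≃ α.ToType) := by
    rw [← Cardinal.lift_mk_eq', Cardinal.mk_nat, Cardinal.lift_aleph0, Cardinal.mk_toType,
      hcard, Cardinal.lift_aleph0]
  set r : ℕ → ℕ → Prop := fun a b => e a < e b with hr_def
  have hiso : r ≃r ((· < ·) : α.ToType → α.ToType → Prop) := ⟨e, Iff.rfl⟩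
  haveI hwo : IsWellOrder α.ToType ((· < ·) : α.ToType → α.ToType → Prop) := isWellOrder_lt
  haveI : IsWellOrder ℕ r := hiso.toRelEmbedding.isWellOrder
  have htype : Ordinal.lift.{u_1} (type r) = α := by
    have := Ordinal.lift_type_eq.{0, u_1, 0}.2 ⟨hiso⟩
    rwa [Ordinal.type_toType, Ordinal.lift_id'] at this
  refine ⟨Zr r, ?_, ?_⟩
  · apply Set.infinite_of_injective_forall_mem (f := fun n : ℕ => code [n])
    · intro a b h
      have := code_inj h
      simpa using this
    · intro n
      exact ⟨[n], List.isChain_singleton n, rfl⟩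
  · have claim : ∀ z ∈ Zr r, z ∉ ([] : List (List Bool)) →
        ∃ β : Ordinal.{u_1}, CGValue (Zr r) ([] ++ [z]) β ∧
          ∀ n, z = code [n] → Ordinal.lift.{u_1} (typein r n) ≤ β := by
      rintro z ⟨σ, hσdec, rfl⟩ _
      obtain ⟨β, hβ1, hβ2⟩ := main r _ [σ] σ
        (by simpa using hσdec) (by simp) (by simp) (List.nodup_singleton σ) rfl
      refine ⟨β, by simpa using hβ2, ?_⟩
      intro n hn
      have := code_inj hn
      subst this
      have hO : O r [n] = typein r n := by
        rw [O, dif_neg (by simp)]; simp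
      rw [← hO]; exact hβ1
    set g : List Bool → Ordinal.{u_1} := fun z =>
      if h : ∃ β : Ordinal.{u_1}, CGValue (Zr r) ([] ++ [z]) β ∧
          ∀ n, z = code [n] → Ordinal.lift.{u_1} (typein r n) ≤ β then h.choose else 0 with hg_def
    have hg : ∀ z ∈ Zr r, z ∉ ([] : List (List Bool)) →
        CGValue (Zr r) ([] ++ [z]) (g z) := by
      intro z hz hz'
      have h := claim z hz hz'
      rw [hg_def]; simp only [dif_pos h]
      exact h.choose_spec.1
    have hnl : ¬ Lost ([] : List (List Bool)) := by
      rintro ⟨u, hu, -⟩; simp at hu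
    refine ⟨_, ?_, CGValue.step [] hnl g hg⟩
    apply le_of_forall_lt
    intro δ hδ
    rw [← htype] at hδ
    obtain ⟨δ₀, rfl⟩ := Ordinal.mem_range_lift_of_le hδ.le
    rw [Ordinal.lift_lt] at hδ
    obtain ⟨n, hn⟩ := typein_surj r hδ
    have hzZ : code [n] ∈ Zr r := ⟨[n], List.isChain_singleton n, rfl⟩
    have hznp : code [n] ∉ ([] : List (List Bool)) := by simp
    have h := claim _ hzZ hznp
    have hgz : Ordinal.lift.{u_1} (typein r n) ≤ g (code [n]) := by
      rw [hg_def]; simp only [dif_pos h]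
      exact h.choose_spec.2 n rfl
    calc Ordinal.lift.{u_1} δ₀ = Ordinal.lift.{u_1} (typein r n) := by rw [hn]
      _ < g (code [n]) + 1 := (lt_add_one _).trans_le' hgz
      _ ≤ _ := Ordinal.le_iSup (fun z : {z : List Bool // z ∈ Zr r ∧ z ∉ ([] : List (List Bool))} =>
          g z.1 + 1) ⟨_, hzZ, hznp⟩
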